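/- Let D be a doubly partial order on a finite set V ⊆ ℝ², define f(p) = p₂ − p₁, and for each vertex x let J(x) = conv{f(a) : a ∈ N⁺(x) ∪ {x}} ⊆ ℝ. If distinct vertices x and y are adjacent in the phylogeny graph of D, then J(x) ∩ J(y) ≠ ∅. -/

import Mathlib

/-- `prec x y` means `x₁ < y₁` and `x₂ < y₂`, written `x ≺ y`. -/
def prec (x y : ℝ × ℝ) : Prop := x.1 < y.1 ∧ x.2 < y.2

/-- `f p = p₂ - p₁`. -/
def fdiag (p : ℝ × ℝ) : ℝ := p.2 - p.1

/-- The phylogeny graph of the doubly partial order on a finite set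
`V ⊆ ℝ²` (arcs `(x,v)` exactly when `v ≺ x`). -/
def phylogenyGraph (V : Finset (ℝ × ℝ)) : SimpleGraph {p : ℝ × ℝ // p ∈ V} where
  Adj u v := u ≠ v ∧
    (prec u.1 v.1 ∨ prec v.1 u.1 ∨ ∃ z ∈ V, prec z u.1 ∧ prec z v.1)
  symm := by
    constructor
    intro u v h
    exact ⟨Ne.symm h.1, by tauto⟩
  loopless := by
    constructor
    intro u h
    exact h.1 rfl

/-- `J(x) = conv{f(a) : a ∈ N⁺(x) ∪ {x}}`, where `N⁺(x) = {v ∈ V : v ≺ x}`. -/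
noncomputable def phyloInterval (V : Finset (ℝ × ℝ)) (x : ℝ × ℝ) : Set ℝ :=
  convexHull ℝ (fdiag '' ({v : ℝ × ℝ | v ∈ V ∧ prec v x} ∪ {x}))

/-- If distinct vertices `x` and `y` are adjacent in the phylogeny graph of a
doubly partial order, then the intervals `J(x)` and `J(y)` intersect. -/
theorem phyloInterval_inter_nonempty_of_adj (V : Finset (ℝ × ℝ))
    (x y : {p : ℝ × ℝ // p ∈ V}) (hxy : x ≠ y)
    (hadj : (phylogenyGraph V).Adj x y) :
    (phyloInterval V x.1 ∩ phyloInterval V y.1).Nonempty := by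
  have mem : ∀ (a : ℝ × ℝ) (w : ℝ × ℝ), a ∈ ({v : ℝ × ℝ | v ∈ V ∧ prec v w} ∪ {w}) →
      fdiag a ∈ phyloInterval V w := by
    intro a w ha
    exact subset_convexHull ℝ _ ⟨a, ha, rfl⟩
  obtain ⟨-, h | h | ⟨z, hzV, hzx, hzy⟩⟩ := hadj
  · exact ⟨fdiag x.1, mem x.1 x.1 (Or.inr rfl), mem x.1 y.1 (Or.inl ⟨x.2, h⟩)⟩
  · exact ⟨fdiag y.1, mem y.1 x.1 (Or.inl ⟨y.2, h⟩), mem y.1 y.1 (Or.inr rfl)⟩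
  · exact ⟨fdiag z, mem z x.1 (Or.inl ⟨hzV, hzx⟩), mem z y.1 (Or.inl ⟨hzV, hzy⟩)⟩
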